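/- The elliptic curve $y^2 = x^3 + t(t^2 + 4t + 1)x^2 + t^4 x$ over $\mathbb{Q}(t)$ has the rational point $(-t^3, 2t^4)$, and this point has infinite order; moreover $(0,0)$ has exact order $2$. -/

import Mathlib

noncomputable section

/-- The elliptic curve `y² = x³ + t(t² + 4t + 1)x² + t⁴x` over `ℚ(t)`. -/
def W15 : WeierstrassCurve.Affine (RatFunc ℚ) :=
  { a₁ := 0, a₂ := RatFunc.X * (RatFunc.X ^ 2 + 4 * RatFunc.X + 1), a₃ := 0,
    a₄ := RatFunc.X ^ 4, a₆ := 0 }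

namespace Aux15

open Classical

open WeierstrassCurve.Affine

instance : CharZero (RatFunc ℚ) :=
  charZero_of_injective_algebraMap (R := ℚ) (algebraMap ℚ (RatFunc ℚ)).injective

open Polynomial

/-! ### A transcendental number and evaluation maps -/

def ell : ℝ := liouvilleNumber 3

lemma ell_trans : Transcendental ℚ ell := by
  intro h
  have h' : IsAlgebraic ℤ ell := (IsFractionRing.isAlgebraic_iff ℤ ℚ ℝ).mpr h
  have := transcendental_liouvilleNumber (m := 3) (by norm_num)
  norm_num at this
  exact this h'

lemma ell_pos : 0 < ell := by
  have h1 := LiouvilleNumber.partialSum_add_remainder (m := 3) (by norm_num) 0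
  have h2 := LiouvilleNumber.remainder_pos (m := 3) (by norm_num) 0
  have h3 : LiouvilleNumber.partialSum 3 0 = 1/3 := by
    simp [LiouvilleNumber.partialSum, Nat.factorial]
  rw [show liouvilleNumber 3 = liouvilleNumber 3 from rfl] at h1
  unfold ell
  nlinarith [h1, h2, h3]

lemma ell_lt_one : ell < 1 := by
  have h1 := LiouvilleNumber.partialSum_add_remainder (m := 3) (by norm_num) 0
  have h2 := LiouvilleNumber.remainder_lt' 0 (m := 3) (by norm_num)
  have h3 : LiouvilleNumber.partialSum 3 0 = 1/3 := by
    simp [LiouvilleNumber.partialSum, Nat.factorial]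
  have h4 : ((1 : ℝ) - 1/3)⁻¹ * (1/3 ^ (0+1).factorial) = 1/2 := by
    norm_num [Nat.factorial]
  unfold ell
  nlinarith [h1, h2, h3, h4]

lemma trans_affine {r : ℝ} (h : Transcendental ℚ r) {c d : ℚ} (hc : c ≠ 0) :
    Transcendental ℚ ((c : ℝ) * r + (d : ℝ)) := by
  have := h.aeval (C c * X + C d) (by rw [natDegree_linear hc]; norm_num)
    (by rw [leadingCoeff_linear hc]; exact mem_nonZeroDivisors_of_ne_zero hc)
  simpa using this

def sig {r : ℝ} (hr : Transcendental ℚ r) : RatFunc ℚ →+* ℝ :=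
  IsFractionRing.lift (g := ((Polynomial.aeval r).toRingHom : ℚ[X] →+* ℝ))
    (transcendental_iff_injective.mp hr)

lemma sig_X {r : ℝ} (hr : Transcendental ℚ r) : sig hr RatFunc.X = r := by
  rw [← RatFunc.algebraMap_X, sig, IsFractionRing.lift_algebraMap]
  simp

/-! ### Vieta-style identities for the group law on `y² = x³ + ax² + bx` -/

lemma vieta_line {F : Type*} [Field F] {a b x₁ y₁ x₂ y₂ l : F}
    (e₁ : y₁ ^ 2 = x₁ ^ 3 + a * x₁ ^ 2 + b * x₁)
    (e₂ : y₂ ^ 2 = x₂ ^ 3 + a * x₂ ^ 2 + b * x₂)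
    (hl : l * (x₁ - x₂) = y₁ - y₂) (hx : x₁ ≠ x₂) :
    x₁ * x₂ * (l ^ 2 - a - x₁ - x₂) = (y₁ - l * x₁) ^ 2 ∧
    x₁ * x₂ + (x₁ + x₂) * (l ^ 2 - a - x₁ - x₂) = b - 2 * l * (y₁ - l * x₁) := by
  have hx' : x₁ - x₂ ≠ 0 := sub_ne_zero.mpr hx
  constructor
  · have key : (x₁ - x₂) * (x₁ * x₂ * (l ^ 2 - a - x₁ - x₂) - (y₁ - l * x₁) ^ 2) = 0 := by
      linear_combination x₂ * e₁ - x₁ * e₂ + x₁ * (y₂ + l * x₂ + y₁ - l * x₁) * hl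
    exact sub_eq_zero.mp ((mul_eq_zero.mp key).resolve_left hx')
  · have key : (x₁ - x₂) * ((x₁ * x₂ + (x₁ + x₂) * (l ^ 2 - a - x₁ - x₂))
        - (b - 2 * l * (y₁ - l * x₁))) = 0 := by
      linear_combination e₁ - e₂ + (y₂ + l * x₂ + y₁ - l * x₁) * hl
    exact sub_eq_zero.mp ((mul_eq_zero.mp key).resolve_left hx')

lemma vieta_tangent {F : Type*} [Field F] {a b x₁ y₁ l : F}
    (e₁ : y₁ ^ 2 = x₁ ^ 3 + a * x₁ ^ 2 + b * x₁)
    (hd : l * (2 * y₁) = 3 * x₁ ^ 2 + 2 * a * x₁ + b) :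
    x₁ * x₁ * (l ^ 2 - a - x₁ - x₁) = (y₁ - l * x₁) ^ 2 ∧
    x₁ * x₁ + (x₁ + x₁) * (l ^ 2 - a - x₁ - x₁) = b - 2 * l * (y₁ - l * x₁) := by
  constructor
  · linear_combination x₁ * hd - e₁
  · linear_combination hd

/-! ### The sign indicator -/

def ind (x : ℝ) : ZMod 2 := if x < 0 then 1 else 0

lemma ind_zero : ind 0 = 0 := by simp [ind]

lemma ind_of_mul_pos {u v : ℝ} (h : 0 < u * v) : ind u = ind v := by
  unfold ind
  split_ifs with hu hv hv'
  · rfl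
  · exfalso; push_neg at hv; nlinarith
  · exfalso; push_neg at hu; nlinarith
  · rfl

lemma ind_of_mul_mul_pos {u v w : ℝ} (h : 0 < u * v * w) : ind w = ind u + ind v := by
  unfold ind
  split_ifs with hw hu hv hv2 hu2 hv3 hv4
  · exfalso; nlinarith [mul_pos_of_neg_of_neg hu hv]
  · decide
  · decide
  · exfalso; push_neg at hu hv2; nlinarith [mul_nonneg hu hv2]
  · decide
  · exfalso; push_neg at hw hv3; nlinarith [mul_nonneg hv3 hw]
  · exfalso; push_neg at hw hu2; nlinarith [mul_nonneg hu2 hw]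
  · decide

lemma ind_core {b X₁ X₂ X₃ L ν : ℝ} (hb : 0 < b)
    (V1 : X₁ * X₂ * X₃ = ν ^ 2) (V2 : X₁ * X₂ + (X₁ + X₂) * X₃ = b - 2 * L * ν)
    (h10 : X₁ = 0 → ν = 0) (h20 : X₂ = 0 → ν = 0) :
    ind X₃ = ind X₁ + ind X₂ := by
  by_cases h1 : X₁ = 0
  · have hν := h10 h1
    have key : 0 < X₂ * X₃ := by
      have : X₂ * X₃ = b := by rw [h1, hν] at V2; linear_combination V2
      linarith
    rw [h1, ind_zero, zero_add]
    exact (ind_of_mul_pos key).symm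
  by_cases h2 : X₂ = 0
  · have hν := h20 h2
    have key : 0 < X₁ * X₃ := by
      have : X₁ * X₃ = b := by rw [h2, hν] at V2; linear_combination V2
      linarith
    rw [h2, ind_zero, add_zero]
    exact (ind_of_mul_pos key).symm
  by_cases hν : ν = 0
  · have h3 : X₃ = 0 := by
      have hz : X₁ * X₂ * X₃ = 0 := by rw [hν] at V1; linear_combination V1
      rcases mul_eq_zero.mp hz with h | h
      · exact absurd h (mul_ne_zero h1 h2)
      · exact h
    have key : 0 < X₁ * X₂ := by
      have : X₁ * X₂ = b := by rw [h3, hν] at V2; linear_combination V2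
      linarith
    rw [h3, ind_zero]
    have := ind_of_mul_pos key
    rw [this]
    have : ∀ z : ZMod 2, z + z = 0 := by decide
    exact (this _).symm
  · have key : 0 < X₁ * X₂ * X₃ := by rw [V1]; positivity
    exact ind_of_mul_mul_pos key

lemma ind_addX {a b X₁ Y₁ X₂ Y₂ L : ℝ} (hb : 0 < b)
    (e₁ : Y₁ ^ 2 = X₁ ^ 3 + a * X₁ ^ 2 + b * X₁)
    (e₂ : Y₂ ^ 2 = X₂ ^ 3 + a * X₂ ^ 2 + b * X₂)
    (hl : (X₁ ≠ X₂ ∧ L * (X₁ - X₂) = Y₁ - Y₂) ∨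
      (X₂ = X₁ ∧ Y₂ = Y₁ ∧ Y₁ ≠ 0 ∧ L * (2 * Y₁) = 3 * X₁ ^ 2 + 2 * a * X₁ + b)) :
    ind (L ^ 2 - a - X₁ - X₂) = ind X₁ + ind X₂ := by
  rcases hl with ⟨hx, hl⟩ | ⟨hx2, hy2, hy0, hd⟩
  · obtain ⟨V1, V2⟩ := vieta_line e₁ e₂ hl hx
    refine ind_core hb V1 V2 (fun h1 => ?_) (fun h2 => ?_)
    · have hy1 : Y₁ = 0 := by
        rw [h1] at e₁
        have : Y₁ ^ 2 = 0 := by linear_combination e₁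
        exact (pow_eq_zero_iff two_ne_zero).mp this  -- may need fixing
      rw [hy1, h1]; ring
    · have hy2' : Y₂ = 0 := by
        rw [h2] at e₂
        have : Y₂ ^ 2 = 0 := by linear_combination e₂
        exact (pow_eq_zero_iff two_ne_zero).mp this
      rw [h2] at hl
      linear_combination hy2' - hl
  · subst hx2
    have hy1 : Y₂ = Y₁ := hy2
    obtain ⟨V1, V2⟩ := vieta_tangent e₁ hd
    refine ind_core hb V1 V2 (fun h1 => ?_) (fun h1 => ?_) <;>
    · exfalso
      apply hy0
      rw [h1] at e₁
      have : Y₁ ^ 2 = 0 := by linear_combination e₁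
      exact (pow_eq_zero_iff two_ne_zero).mp this


/-! ### Curve-specific material -/

abbrev K := RatFunc ℚ

def T : K := RatFunc.X

lemma hT : T ≠ 0 := RatFunc.X_ne_zero

lemma ha₁ : W15.a₁ = 0 := rfl
lemma ha₃ : W15.a₃ = 0 := rfl
lemma ha₆ : W15.a₆ = 0 := rfl
lemma ha₄ : W15.a₄ = T ^ 4 := rfl

lemma negY15 (x y : K) : W15.negY x y = -y := by
  rw [WeierstrassCurve.Affine.negY, ha₁, ha₃]; ring

lemma equation15 {x y : K} (h : W15.Equation x y) :
    y ^ 2 = x ^ 3 + W15.a₂ * x ^ 2 + W15.a₄ * x := by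
  have := (W15.equation_iff x y).mp h
  rw [ha₁, ha₃, ha₆] at this
  linear_combination this

/-- Real form of the curve equation under an evaluation map. -/
lemma requation {σ : K →+* ℝ} {x y : K} (h : W15.Equation x y) :
    (σ y) ^ 2 = (σ x) ^ 3 + σ W15.a₂ * (σ x) ^ 2 + σ W15.a₄ * σ x := by
  have := congrArg σ (equation15 h)
  simpa only [map_add, map_mul, map_pow] using this

def phi (σ : K →+* ℝ) : W15.Point → ZMod 2
  | .zero => 0
  | .some x _ _ => ind (σ x)

@[simp] lemma phi_zero (σ : K →+* ℝ) : phi σ 0 = 0 := rfl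

@[simp] lemma phi_some (σ : K →+* ℝ) {x y : K} (h : W15.Nonsingular x y) :
    phi σ (Point.some _ _ h) = ind (σ x) := rfl

lemma phi_add (σ : K →+* ℝ) (hσT : σ T ≠ 0) (P Q : W15.Point) :
    phi σ (P + Q) = phi σ P + phi σ Q := by
  have hb : 0 < σ W15.a₄ := by
    rw [ha₄, map_pow]
    positivity
  rcases P with _ | @⟨x₁, y₁, h₁⟩
  · rw [← Point.zero_def, zero_add, phi_zero, zero_add]
  rcases Q with _ | @⟨x₂, y₂, h₂⟩
  · rw [← Point.zero_def, add_zero, phi_zero, add_zero]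
  by_cases hc : x₁ = x₂ ∧ y₁ = W15.negY x₂ y₂
  · rw [Point.add_of_Y_eq hc.1 hc.2, phi_zero, phi_some, phi_some, hc.1]
    have : ∀ z : ZMod 2, 0 = z + z := by decide
    exact this _
  · have hxy : x₁ = x₂ → y₁ ≠ W15.negY x₂ y₂ := fun hx hy => hc ⟨hx, hy⟩
    rw [Point.add_some hc, phi_some, phi_some, phi_some]
    set L := W15.slope x₁ x₂ y₁ y₂ with hL
    have haddX : σ (W15.addX x₁ x₂ L) = (σ L) ^ 2 - σ W15.a₂ - σ x₁ - σ x₂ := by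
      rw [WeierstrassCurve.Affine.addX, ha₁]
      simp only [map_add, map_sub, map_mul, map_pow, map_zero, zero_mul, add_zero]
    rw [haddX]
    have E₁ := requation (σ := σ) h₁.1
    have E₂ := requation (σ := σ) h₂.1
    refine ind_addX hb E₁ E₂ ?_
    by_cases hx : x₁ = x₂
    · right
      have hy := hxy hx
      have hyy : y₁ = y₂ := Y_eq_of_Y_ne h₁.1 h₂.1 hx hy
      have hy0 : y₁ ≠ 0 := by
        intro h0
        rw [negY15, hyy] at hy
        apply hy
        rw [← hyy, h0, neg_zero]
      have h2y : (2 : K) * y₁ ≠ 0 := mul_ne_zero (by norm_num) hy0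
      have hd : L * (2 * y₁) = 3 * x₁ ^ 2 + 2 * W15.a₂ * x₁ + W15.a₄ := by
        rw [hL, slope_of_Y_ne hx hy, negY15, ha₁,
          show y₁ - -y₁ = 2 * y₁ by ring, zero_mul, sub_zero]
        exact div_mul_cancel₀ _ h2y
      have hdr := congrArg σ hd
      simp only [map_mul, map_add, map_pow, map_ofNat] at hdr
      refine ⟨?_, ?_, ?_, ?_⟩
      · rw [hx]
      · rw [hyy]
      · intro h0
        exact hy0 (by
          have : σ y₁ = σ 0 := by rw [h0, map_zero]
          exact σ.injective this)
      · linear_combination hdr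
    · left
      have hd : L * (x₁ - x₂) = y₁ - y₂ := by
        rw [hL, slope_of_X_ne hx]
        exact div_mul_cancel₀ _ (sub_ne_zero.mpr hx)
      have hdr := congrArg σ hd
      simp only [map_mul, map_sub] at hdr
      refine ⟨fun h => hx (σ.injective h), hdr⟩

def Phi (σ : K →+* ℝ) (hσT : σ T ≠ 0) : W15.Point →+ ZMod 2 :=
  AddMonoidHom.mk' (phi σ) (phi_add σ hσT)

lemma sig_a₂ {r : ℝ} (hr : Transcendental ℚ r) : sig hr W15.a₂ = r * (r ^ 2 + 4 * r + 1) := by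
  show sig hr (RatFunc.X * (RatFunc.X ^ 2 + 4 * RatFunc.X + 1)) = _
  rw [map_mul, map_add, map_add, map_pow, map_mul, map_one, map_ofNat, sig_X]

lemma sig_a₄ {r : ℝ} (hr : Transcendental ℚ r) : sig hr W15.a₄ = r ^ 4 := by
  show sig hr (RatFunc.X ^ 4) = _
  rw [map_pow, sig_X]

lemma hPns : W15.Nonsingular (-(RatFunc.X ^ 3)) (2 * RatFunc.X ^ 4) := by
  rw [WeierstrassCurve.Affine.nonsingular_iff, WeierstrassCurve.Affine.equation_iff]
  constructor
  · rw [ha₁, ha₃, ha₆, ha₄, show W15.a₂ = RatFunc.X * (RatFunc.X ^ 2 + 4 * RatFunc.X + 1) from rfl]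
    show _ = _
    unfold T
    ring
  · right
    rw [ha₁, ha₃]
    intro hcon
    have h4 : (4 : K) * RatFunc.X ^ 4 = 0 := by linear_combination hcon
    exact mul_ne_zero (by norm_num) (pow_ne_zero 4 RatFunc.X_ne_zero) h4

lemma h₀ns : W15.Nonsingular (0 : K) 0 := by
  rw [WeierstrassCurve.Affine.nonsingular_iff, WeierstrassCurve.Affine.equation_iff]
  constructor
  · rw [ha₆]; ring
  · left
    rw [ha₁, ha₄]
    intro hcon
    have h4 : T ^ 4 = 0 := by linear_combination -hcon
    exact pow_ne_zero 4 hT h4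

end Aux15

set_option maxHeartbeats 2000000 in
open Aux15 WeierstrassCurve.Affine in
open Classical in
/-- The point `(-t³, 2t⁴)` lies on the curve and has infinite order; `(0,0)` has
exact order 2. -/
theorem stmt15 :
    ∃ hP : W15.Nonsingular (-(RatFunc.X ^ 3)) (2 * RatFunc.X ^ 4),
      ∃ h₀ : W15.Nonsingular 0 0,
      ¬ IsOfFinAddOrder (WeierstrassCurve.Affine.Point.some _ _ hP) ∧
      addOrderOf (WeierstrassCurve.Affine.Point.some _ _ h₀) = 2 := by
  refine ⟨hPns, h₀ns, ?_, ?_⟩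
  · -- infinite order
    intro hfin
    set P : W15.Point := Point.some _ _ hPns with hPdef
    -- the first evaluation map, at t = ell > 0
    have hσ₁T : sig ell_trans T = ell := sig_X ell_trans
    have hσ₁ : sig ell_trans T ≠ 0 := by rw [hσ₁T]; exact ne_of_gt ell_pos
    set σ₁ := sig ell_trans with hσ₁def
    have hPhiP : Phi σ₁ hσ₁ P = 1 := by
      show phi σ₁ (Point.some _ _ hPns) = 1
      rw [phi_some]
      have hσ₁X : σ₁ RatFunc.X = ell := hσ₁T
      have hval : σ₁ (-(RatFunc.X ^ 3)) = -(ell ^ 3) := by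
        rw [map_neg, map_pow, hσ₁X]
      have hlt : -(ell ^ 3) < 0 := by
        have := pow_pos ell_pos 3; linarith
      rw [hval]
      unfold ind
      rw [if_pos hlt]
    have hn0 : addOrderOf P ≠ 0 := hfin.addOrderOf_pos.ne'
    have hnP : addOrderOf P • P = 0 := addOrderOf_nsmul_eq_zero P
    have hpar : ((addOrderOf P : ℕ) : ZMod 2) = 0 := by
      have e1 := congrArg (Phi σ₁ hσ₁) hnP
      rw [map_nsmul, hPhiP, map_zero, nsmul_eq_mul, mul_one] at e1
      exact e1
    obtain ⟨m, hm⟩ := (ZMod.natCast_eq_zero_iff _ 2).mp hpar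
    have hm0 : m ≠ 0 := by rintro rfl; rw [Nat.mul_zero] at hm; exact hn0 hm
    rcases hQ : m • P with _ | @⟨x, y, h⟩
    · have hdvd : addOrderOf P ∣ m :=
        addOrderOf_dvd_of_nsmul_eq_zero (by rw [hQ, Point.zero_def])
      have := Nat.le_of_dvd (Nat.pos_of_ne_zero hm0) (hm ▸ hdvd)
      omega
    have hQQ : Point.some _ _ h + Point.some _ _ h = (0 : W15.Point) := by
      calc Point.some _ _ h + Point.some _ _ h = m • P + m • P := by rw [hQ]
        _ = (m + m) • P := (add_nsmul P m m).symm
        _ = addOrderOf P • P := by rw [← two_mul, ← hm]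
        _ = 0 := hnP
    have hy0 : y = 0 := by
      by_cases hyn : y = W15.negY x y
      · rw [negY15] at hyn
        have h2 : (2 : K) * y = 0 := by linear_combination hyn
        rcases mul_eq_zero.mp h2 with h2' | h2'
        · exact absurd h2' (by norm_num)
        · exact h2'
      · rw [Point.add_self_of_Y_ne hyn] at hQQ
        exact absurd hQQ (Point.some_ne_zero _)
    subst hy0
    have heq : (0 : K) = x ^ 3 + W15.a₂ * x ^ 2 + W15.a₄ * x := by
      have := equation15 h.1
      linear_combination this
    by_cases hx0 : x = 0
    · subst hx0
      -- m is even
      have hmpar : ((m : ℕ) : ZMod 2) = 0 := by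
        have e1 := congrArg (Phi σ₁ hσ₁) hQ
        rw [map_nsmul, hPhiP, nsmul_eq_mul, mul_one] at e1
        have e2 : Phi σ₁ hσ₁ (Point.some _ _ h) = 0 := by
          show phi σ₁ (Point.some _ _ h) = 0
          rw [phi_some, map_zero, ind_zero]
        rw [e2] at e1
        exact e1
      obtain ⟨k, hk⟩ := (ZMod.natCast_eq_zero_iff _ 2).mp hmpar
      have hRR : k • P + k • P = Point.some _ _ h := by
        rw [← add_nsmul, ← two_mul, ← hk, hQ]
      rcases hR : k • P with _ | @⟨xr, yr, hr⟩
      · rw [hR, ← Point.zero_def, zero_add] at hRR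
        exact absurd hRR.symm (Point.some_ne_zero _)
      rw [hR] at hRR
      by_cases hyrn : yr = W15.negY xr yr
      · rw [Point.add_self_of_Y_eq hyrn] at hRR
        exact absurd hRR.symm (Point.some_ne_zero _)
      rw [Point.add_self_of_Y_ne hyrn] at hRR
      rw [Point.some.injEq] at hRR
      obtain ⟨hX3, hY3⟩ := hRR
      have hyr0 : yr ≠ 0 := by
        intro h0; apply hyrn; rw [negY15, h0, neg_zero]
      have hd : W15.slope xr xr yr yr * (2 * yr)
          = 3 * xr ^ 2 + 2 * W15.a₂ * xr + W15.a₄ := by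
        rw [slope_of_Y_ne rfl hyrn, negY15, ha₁, show yr - -yr = 2 * yr by ring,
          zero_mul, sub_zero]
        exact div_mul_cancel₀ _ (mul_ne_zero two_ne_zero hyr0)
      have e := equation15 hr.1
      obtain ⟨V1, V2⟩ := vieta_tangent e hd
      have hz : W15.slope xr xr yr yr ^ 2 - W15.a₂ - xr - xr = 0 := by
        rw [WeierstrassCurve.Affine.addX, ha₁] at hX3
        linear_combination hX3
      have hν : yr - W15.slope xr xr yr yr * xr = 0 := by
        rw [hz] at V1
        have hsq : (yr - W15.slope xr xr yr yr * xr) ^ 2 = 0 := by linear_combination -V1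
        exact (pow_eq_zero_iff two_ne_zero).mp hsq
      have hx2 : xr ^ 2 = T ^ 4 := by
        rw [hz, hν] at V2
        rw [ha₄] at V2
        linear_combination V2
      -- evaluate at t = -(ell/10)
      have t₃ : Transcendental ℚ (-(ell / 10)) := by
        have h3 := trans_affine ell_trans (c := -1/10) (d := 0) (by norm_num)
        have heq3 : ((-1/10 : ℚ) : ℝ) * ell + ((0 : ℚ) : ℝ) = -(ell / 10) := by
          push_cast; ring
        rwa [heq3] at h3
      set q : ℝ := ell / 10 with hqdef
      have hq0 : 0 < q := div_pos ell_pos (by norm_num)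
      have hq1 : q < 1 / 10 := by
        rw [hqdef]; linarith [ell_lt_one]
      set σ₃ := sig t₃ with hσ₃def
      have hs : σ₃ T = -q := sig_X t₃
      have hA3 : σ₃ W15.a₂ = (-q) * ((-q) ^ 2 + 4 * (-q) + 1) := sig_a₂ t₃
      have hB3 : σ₃ W15.a₄ = (-q) ^ 4 := sig_a₄ t₃
      have hu2 : (σ₃ xr) ^ 2 = q ^ 4 := by
        have hthis := congrArg σ₃ hx2
        rw [map_pow, map_pow, hs] at hthis
        rw [hthis]; ring
      have hveq : (σ₃ yr) ^ 2 = (σ₃ xr) ^ 3 + σ₃ W15.a₂ * (σ₃ xr) ^ 2 + σ₃ W15.a₄ * σ₃ xr :=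
        requation hr.1
      have hfac : 0 < q ^ 2 - 6 * q + 1 := by nlinarith
      have hfac2 : 0 < (q - 1) ^ 2 := by nlinarith
      have hq5 : 0 < q ^ 5 := by positivity
      have hcases : (σ₃ xr - q ^ 2) * (σ₃ xr + q ^ 2) = 0 := by linear_combination hu2
      rcases mul_eq_zero.mp hcases with hc | hc
      · have hu : σ₃ xr = q ^ 2 := by linear_combination hc
        rw [hu, hA3, hB3] at hveq
        have hveq' : (σ₃ yr) ^ 2 = -(q ^ 5 * (q ^ 2 - 6 * q + 1)) := by
          linear_combination hveq
        linarith [sq_nonneg (σ₃ yr), mul_pos hq5 hfac]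
      · have hu : σ₃ xr = -(q ^ 2) := by linear_combination hc
        rw [hu, hA3, hB3] at hveq
        have hveq' : (σ₃ yr) ^ 2 = -(q ^ 5 * (q - 1) ^ 2) := by
          linear_combination hveq
        linarith [sq_nonneg (σ₃ yr), mul_pos hq5 hfac2]
    · -- x ≠ 0: would be a second 2-torsion point; impossible
      have hquad : x ^ 2 + W15.a₂ * x + W15.a₄ = 0 := by
        have hmul : x * (x ^ 2 + W15.a₂ * x + W15.a₄) = 0 := by linear_combination -heq
        rcases mul_eq_zero.mp hmul with h' | h'
        · exact absurd h' hx0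
        · exact h'
      have t₂ : Transcendental ℚ (-1 - ell) := by
        have h2 := trans_affine ell_trans (c := -1) (d := -1) (by norm_num)
        have heq2 : ((-1 : ℚ) : ℝ) * ell + ((-1 : ℚ) : ℝ) = -1 - ell := by push_cast; ring
        rwa [heq2] at h2
      set σ₂ := sig t₂ with hσ₂def
      set r : ℝ := -1 - ell with hrdef
      have hA2 : σ₂ W15.a₂ = r * (r ^ 2 + 4 * r + 1) := sig_a₂ t₂
      have hB2 : σ₂ W15.a₄ = r ^ 4 := sig_a₄ t₂
      have hq : (σ₂ x) ^ 2 + σ₂ W15.a₂ * σ₂ x + σ₂ W15.a₄ = 0 := by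
        have := congrArg σ₂ hquad
        simpa only [map_add, map_mul, map_pow, map_zero] using this
      rw [hA2, hB2] at hq
      have key : (2 * σ₂ x + r * (r ^ 2 + 4 * r + 1)) ^ 2
          = (r * (r ^ 2 + 4 * r + 1)) ^ 2 - 4 * r ^ 4 := by linear_combination 4 * hq
      have hfactor : (r * (r ^ 2 + 4 * r + 1)) ^ 2 - 4 * r ^ 4
          = (1 + ell) ^ 2 * ell ^ 2 * (ell ^ 2 - 4 * ell - 4) := by
        rw [hrdef]; ring
      have hneg : (1 + ell) ^ 2 * ell ^ 2 * (ell ^ 2 - 4 * ell - 4) < 0 := by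
        have h1 : 0 < (1 + ell) ^ 2 * ell ^ 2 :=
          mul_pos (pow_pos (by linarith [ell_pos]) 2) (pow_pos ell_pos 2)
        have h2 : ell ^ 2 - 4 * ell - 4 < 0 := by nlinarith [ell_pos, ell_lt_one]
        exact mul_neg_of_pos_of_neg h1 h2
      rw [hfactor] at key
      linarith [sq_nonneg (2 * σ₂ x + r * (r ^ 2 + 4 * r + 1)), key, hneg]
  · -- (0,0) has order 2
    haveI : Fact (Nat.Prime 2) := ⟨Nat.prime_two⟩
    apply addOrderOf_eq_prime
    · rw [two_nsmul]
      exact Point.add_self_of_Y_eq (by rw [negY15]; ring)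
    · exact Point.some_ne_zero _
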